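/- Let l ≥ 2 be an integer, a, b, r ∈ ℝ, and let z ∈ ℂ satisfy z ≠ 2r²·cos(πn/(l+1)) for every n ∈ {1,…,l}. Define G_{11}(z) = (2/(l+1))·Σ_{n=1}^{l} sin²(πn/(l+1)) / (2r²·cos(πn/(l+1)) − z) and G_{1l}(z) = (2/(l+1))·Σ_{n=1}^{l} sin(πn/(l+1))·sin(πnl/(l+1)) / (2r²·cos(πn/(l+1)) − z). Then z is an eigenvalue of the matrix D_r^{a,b} (regarded as a complex matrix) if and only if 1 + (a + b + 2r)·G_{11}(z) + (a+r)(b+r)·(G_{11}(z)² − G_{1l}(z)²) = 0. -/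

import Mathlib

open Real Finset

/-- The discrete Dirichlet Laplacian on `{1,…,l}` (indices shifted to `Fin l`). -/
noncomputable def lapMat (l : ℕ) : Matrix (Fin l) (Fin l) ℝ :=
  fun x y => if (x : ℤ) = (y : ℤ) + 1 ∨ (y : ℤ) = (x : ℤ) + 1 then 1 else 0

/-- The matrix `D_r^{a,b} = r² Δ_l + (a+r) E_{1,1} + (b+r) E_{l,l}`. -/
noncomputable def Dmat (l : ℕ) (a b r : ℝ) : Matrix (Fin l) (Fin l) ℝ :=
  fun x y =>
    r^2 * lapMat l x y
    + (if (x : ℕ) = 0 ∧ (y : ℕ) = 0 then a + r else 0)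
    + (if (x : ℕ) = l - 1 ∧ (y : ℕ) = l - 1 then b + r else 0)

open Matrix

lemma geom_Icc (l : ℕ) (x : ℂ) (hx : x ≠ 1) :
    ∑ n ∈ Icc 1 l, x^n = (x^(l+1) - x)/(x-1) := by
  have hins : range (l+1) = insert 0 (Icc 1 l) := by
    ext n; simp; omega
  have h0 : (0:ℕ) ∉ Icc 1 l := by simp
  have h1 := geom_sum_eq hx (l+1)
  rw [hins, Finset.sum_insert h0, pow_zero] at h1
  have hx1 : x - 1 ≠ 0 := sub_ne_zero.mpr hx
  field_simp at h1 ⊢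
  linear_combination h1

lemma q_ne_one (l : ℕ) (m : ℤ) (hm : m ≠ 0) (hm' : m.natAbs < 2*(l+1)) :
    Complex.exp (π*m/((l:ℂ)+1) * Complex.I) ≠ 1 := by
  intro h
  rw [Complex.exp_eq_one_iff] at h
  obtain ⟨k, hk⟩ := h
  have hNc : ((l:ℂ)+1) ≠ 0 := by
    have h1 : ((l:ℝ)+1) ≠ 0 := by positivity
    exact_mod_cast h1
  have hπ : (π:ℂ) ≠ 0 := by exact_mod_cast Real.pi_ne_zero
  have hI : (Complex.I : ℂ) ≠ 0 := Complex.I_ne_zero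
  have hmc : (m : ℂ) = 2*k*((l:ℂ)+1) := by
    field_simp at hk
    have h1 : (π:ℂ) * ((m:ℂ) * Complex.I) = (π:ℂ) * ((2*k*((l:ℂ)+1)) * Complex.I) := by
      rw [hk]; ring
    exact mul_right_cancel₀ hI (mul_left_cancel₀ hπ h1)
  have hm2 : m = 2*k*((l:ℤ)+1) := by exact_mod_cast hmc
  have hk0 : k ≠ 0 := by rintro rfl; simp at hm2; exact hm hm2
  have h3 : m.natAbs = 2*k.natAbs*(l+1) := by
    have := congrArg Int.natAbs hm2
    have e : ((l:ℤ)+1).natAbs = l+1 := by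
      rw [show (l:ℤ)+1 = ((l+1:ℕ):ℤ) by push_cast; ring]; rfl
    simpa [Int.natAbs_mul, e] using this
  have hk1 : 1 ≤ k.natAbs := Int.natAbs_pos.mpr hk0
  nlinarith [hm', h3, hk1]

lemma cos_sum (l : ℕ) (m : ℤ) (hm : m ≠ 0) (hm' : m.natAbs < 2*(l+1)) :
    ∑ n ∈ Icc 1 l, Real.cos (π*n*m/(l+1)) = if Even m then (-1:ℝ) else 0 := by
  have hNc : ((l:ℂ)+1) ≠ 0 := by
    have h1 : ((l:ℝ)+1) ≠ 0 := by positivity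
    exact_mod_cast h1
  set θ : ℂ := π*m/((l:ℂ)+1) * Complex.I with hθ
  set q : ℂ := Complex.exp θ with hq
  have hq0 : q ≠ 0 := Complex.exp_ne_zero _
  have hq1 : q ≠ 1 := q_ne_one l m hm hm'
  have hqi1 : q⁻¹ ≠ 1 := by simpa [inv_eq_one] using hq1
  set s : ℂ := (-1:ℂ)^m with hs
  have hqN : q ^ (l+1) = s := by
    rw [hq, ← Complex.exp_nat_mul, hs, ← Complex.exp_pi_mul_I, ← Complex.exp_int_mul]
    congr 1
    rw [hθ]; push_cast; field_simp
  have hqiN : q⁻¹ ^ (l+1) = s := by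
    rw [inv_pow, hqN, hs, ← _root_.zpow_neg]
    rcases Int.even_or_odd m with he | ho
    · rw [he.neg_one_zpow, ((by simpa using he.neg : Even (-m))).neg_one_zpow]
    · rw [ho.neg_one_zpow, ((by simpa using ho.neg : Odd (-m))).neg_one_zpow]
  have key : ∀ n : ℕ, ((Real.cos (π*n*m/(l+1)) : ℝ) : ℂ) = (q^n + q⁻¹^n)/2 := by
    intro n
    rw [Complex.ofReal_cos]
    have h2 := Complex.two_cos (x := ((π*n*m/(l+1) : ℝ) : ℂ))
    have e1 : ((π*n*m/(l+1) : ℝ) : ℂ) * Complex.I = (n:ℂ) * θ := by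
      rw [hθ]; push_cast; ring
    have e2 : -((π*n*m/(l+1) : ℝ) : ℂ) * Complex.I = (n:ℂ) * (-θ) := by
      rw [hθ]; push_cast; ring
    rw [e1, e2] at h2
    rw [Complex.exp_nat_mul, Complex.exp_nat_mul, ← hq, Complex.exp_neg, ← hq] at h2
    rw [inv_pow]
    linear_combination h2/2
  have hsum : ((∑ n ∈ Icc 1 l, Real.cos (π*n*m/(l+1)) : ℝ) : ℂ) = -(1+s)/2 := by
    rw [Complex.ofReal_sum]
    simp_rw [key]
    rw [← Finset.sum_div, Finset.sum_add_distrib, geom_Icc l q hq1, geom_Icc l q⁻¹ hqi1,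
      hqN, hqiN]
    have hq1' : q - 1 ≠ 0 := sub_ne_zero.mpr hq1
    have hqi1' : q⁻¹ - 1 ≠ 0 := sub_ne_zero.mpr hqi1
    have h1q : 1 - q ≠ 0 := fun h => hq1' (by linear_combination -h)
    field_simp
    ring
  rcases Int.even_or_odd m with he | ho
  · have hs1 : s = 1 := he.neg_one_zpow
    rw [if_pos he]
    have : ((∑ n ∈ Icc 1 l, Real.cos (π*n*m/(l+1)) : ℝ) : ℂ) = ((-1 : ℝ) : ℂ) := by
      rw [hsum, hs1]; norm_num
    exact_mod_cast this
  · have hs1 : s = -1 := ho.neg_one_zpow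
    rw [if_neg (Int.not_even_iff_odd.mpr ho)]
    have : ((∑ n ∈ Icc 1 l, Real.cos (π*n*m/(l+1)) : ℝ) : ℂ) = ((0 : ℝ) : ℂ) := by
      rw [hsum, hs1]; norm_num
    exact_mod_cast this

lemma sin_orth (l j k : ℕ) (hj : j ∈ Icc 1 l) (hk : k ∈ Icc 1 l) :
    ∑ n ∈ Icc 1 l, Real.sin (π*n*j/(l+1)) * Real.sin (π*n*k/(l+1))
      = if j = k then ((l:ℝ)+1)/2 else 0 := by
  simp only [Finset.mem_Icc] at hj hk
  have hterm : ∀ n : ℕ, Real.sin (π*n*j/(l+1)) * Real.sin (π*n*k/(l+1))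
      = (Real.cos (π*n*((j:ℤ)-k)/(l+1)) - Real.cos (π*n*((j:ℤ)+k)/(l+1)))/2 := by
    intro n
    have h := Real.cos_sub_cos (π*n*(((j:ℤ)-k : ℤ):ℝ)/(l+1)) (π*n*(((j:ℤ)+k : ℤ):ℝ)/(l+1))
    have e1 : (π*n*(((j:ℤ)-k : ℤ):ℝ)/(l+1) + π*n*(((j:ℤ)+k : ℤ):ℝ)/(l+1))/2 = π*n*j/(l+1) := by
      push_cast; ring
    have e2 : (π*n*(((j:ℤ)-k : ℤ):ℝ)/(l+1) - π*n*(((j:ℤ)+k : ℤ):ℝ)/(l+1))/2 = -(π*n*k/(l+1)) := by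
      push_cast; ring
    rw [e1, e2, Real.sin_neg] at h
    push_cast at h ⊢
    linarith
  rw [Finset.sum_congr rfl (fun n _ => hterm n), ← Finset.sum_div, Finset.sum_sub_distrib]
  by_cases hjk : j = k
  · subst hjk
    have h1 : ∑ n ∈ Icc 1 l, Real.cos (π*n*(((j:ℤ)-j : ℤ):ℝ)/(l+1)) = (l:ℝ) := by
      have : ∀ n ∈ Icc 1 l, Real.cos (π*n*(((j:ℤ)-j : ℤ):ℝ)/(l+1)) = 1 := by
        intro n _; simp
      rw [Finset.sum_congr rfl this]; simp [Nat.card_Icc]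
    have h2 := cos_sum l ((j:ℤ)+j) (by omega) (by omega)
    rw [if_pos ⟨j, rfl⟩] at h2
    push_cast at h1 h2 ⊢
    rw [h1, h2, if_pos rfl]; ring
  · have hm1 : ((j:ℤ) - k) ≠ 0 := by omega
    have hm1' : ((j:ℤ)-k).natAbs < 2*(l+1) := by omega
    have hm2 : ((j:ℤ) + k) ≠ 0 := by omega
    have hm2' : ((j:ℤ)+k).natAbs < 2*(l+1) := by omega
    have c1 := cos_sum l _ hm1 hm1'
    have c2 := cos_sum l _ hm2 hm2'
    push_cast at c1 c2 ⊢
    rw [c1, c2, if_neg hjk]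
    have hpar : Even ((j:ℤ)-k) ↔ Even ((j:ℤ)+k) := by
      constructor <;> intro ⟨t, ht⟩
      · exact ⟨t + k, by omega⟩
      · exact ⟨t - k, by omega⟩
    by_cases he : Even ((j:ℤ)-k)
    · rw [if_pos he, if_pos (hpar.mp he)]; ring
    · rw [if_neg he, if_neg (fun h => he (hpar.mpr h))]; ring

lemma lap_row (l : ℕ) (x : Fin l) (w : ℕ → ℂ) (h0 : w 0 = 0) (hN : w (l+1) = 0) :
    ∑ y : Fin l, ((lapMat l x y : ℝ):ℂ) * w (y.1+1) = w x.1 + w (x.1+2) := by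
  have hsplit : ∀ y : Fin l, ((lapMat l x y : ℝ):ℂ) * w (y.1+1)
      = (if (x:ℤ) = (y:ℤ)+1 then w (y.1+1) else 0)
        + (if (y:ℤ) = (x:ℤ)+1 then w (y.1+1) else 0) := by
    intro y
    simp only [lapMat]
    by_cases h1 : (x:ℤ) = (y:ℤ)+1 <;> by_cases h2 : (y:ℤ) = (x:ℤ)+1
    · exfalso; omega
    · rw [if_pos (Or.inl h1), if_pos h1, if_neg h2]; simp
    · rw [if_pos (Or.inr h2), if_neg h1, if_pos h2]; simp
    · rw [if_neg (by tauto), if_neg h1, if_neg h2]; simp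
  rw [Finset.sum_congr rfl (fun y _ => hsplit y), Finset.sum_add_distrib]
  have hfirst : ∑ y : Fin l, (if (x:ℤ) = (y:ℤ)+1 then w (y.1+1) else 0) = w x.1 := by
    by_cases hx : x.1 = 0
    · rw [Finset.sum_eq_zero, hx, h0]
      intro y _
      rw [if_neg]
      omega
    · have hxl : 0 < l := x.pos
      have hcond : ∀ y : Fin l, ((x:ℤ) = (y:ℤ)+1) ↔ y = (⟨x.1-1, by omega⟩ : Fin l) := by
        intro y
        simp only [Fin.ext_iff]
        omega
      calc ∑ y : Fin l, (if (x:ℤ) = (y:ℤ)+1 then w (y.1+1) else 0)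
          = ∑ y : Fin l, (if y = (⟨x.1-1, by omega⟩ : Fin l) then w (y.1+1) else 0) :=
            Finset.sum_congr rfl (fun y _ => by rw [if_congr (hcond y) rfl rfl])
        _ = w (x.1-1+1) := by rw [Finset.sum_ite_eq' univ]; simp
        _ = w x.1 := by congr 1; omega
  have hsecond : ∑ y : Fin l, (if (y:ℤ) = (x:ℤ)+1 then w (y.1+1) else 0) = w (x.1+2) := by
    by_cases hx : x.1 + 1 < l
    · have hcond : ∀ y : Fin l, ((y:ℤ) = (x:ℤ)+1) ↔ y = (⟨x.1+1, hx⟩ : Fin l) := by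
        intro y
        simp only [Fin.ext_iff]
        omega
      calc ∑ y : Fin l, (if (y:ℤ) = (x:ℤ)+1 then w (y.1+1) else 0)
          = ∑ y : Fin l, (if y = (⟨x.1+1, hx⟩ : Fin l) then w (y.1+1) else 0) :=
            Finset.sum_congr rfl (fun y _ => by rw [if_congr (hcond y) rfl rfl])
        _ = w (x.1+1+1) := by rw [Finset.sum_ite_eq' univ]; simp
        _ = w (x.1+2) := by congr 1
    · rw [Finset.sum_eq_zero, show x.1 + 2 = l + 1 by have := x.2; omega, hN]
      intro y _
      rw [if_neg]
      have := y.2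
      omega
  rw [hfirst, hsecond]

noncomputable def vS (l n : ℕ) (x : Fin l) : ℂ := ((Real.sin (π*n*(x.1+1)/(l+1)) : ℝ):ℂ)

noncomputable def dS (l : ℕ) (r : ℝ) (z : ℂ) (n : ℕ) : ℂ :=
  ((2*r^2*Real.cos (π*(n:ℝ)/(l+1)) : ℝ) : ℂ) - z

noncomputable def Gmat (l : ℕ) (r : ℝ) (z : ℂ) : Matrix (Fin l) (Fin l) ℂ :=
  Matrix.of fun x y => (2/((l:ℂ)+1)) * ∑ n ∈ Icc 1 l, vS l n x * vS l n y / dS l r z n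

noncomputable def Mmat (l : ℕ) (r : ℝ) (z : ℂ) : Matrix (Fin l) (Fin l) ℂ :=
  Matrix.of fun x y => ((r^2 * lapMat l x y : ℝ):ℂ) - z * (if x = y then 1 else 0)

lemma eig_row (l : ℕ) (hl : 1 ≤ l) (r : ℝ) (n : ℕ) (x : Fin l) :
    ∑ y : Fin l, ((r^2 * lapMat l x y : ℝ):ℂ) * vS l n y
      = ((2*r^2*Real.cos (π*(n:ℝ)/(l+1)) : ℝ):ℂ) * vS l n x := by
  have hN : ((l:ℝ)+1) ≠ 0 := by positivity
  set w : ℕ → ℂ := fun m => ((Real.sin (π*n*(m:ℝ)/(l+1)) : ℝ):ℂ) with hw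
  have h0 : w 0 = 0 := by simp [hw]
  have hNw : w (l+1) = 0 := by
    simp only [hw]
    have e : π*(n:ℝ)*((l+1:ℕ):ℝ)/((l:ℝ)+1) = n*π := by push_cast; field_simp
    rw [e, Real.sin_nat_mul_pi]
    simp
  have key : ∑ y : Fin l, ((lapMat l x y : ℝ):ℂ) * w (y.1+1) = w x.1 + w (x.1+2) :=
    lap_row l x w h0 hNw
  have hident : w x.1 + w (x.1+2) = ((2*Real.cos (π*(n:ℝ)/(l+1)) : ℝ):ℂ) * w (x.1+1) := by
    simp only [hw, ← Complex.ofReal_mul]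
    rw [← Complex.ofReal_add]
    congr 1
    have e1 : π*(n:ℝ)*((x.1:ℕ):ℝ)/((l:ℝ)+1)
        = π*(n:ℝ)*((x.1:ℝ)+1)/((l:ℝ)+1) - π*(n:ℝ)/((l:ℝ)+1) := by field_simp; ring
    have e2 : π*(n:ℝ)*((x.1+2:ℕ):ℝ)/((l:ℝ)+1)
        = π*(n:ℝ)*((x.1:ℝ)+1)/((l:ℝ)+1) + π*(n:ℝ)/((l:ℝ)+1) := by push_cast; field_simp; ring
    rw [e1, e2, Real.sin_sub, Real.sin_add]
    push_cast
    ring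
  have hv : ∀ y : Fin l, vS l n y = w (y.1+1) := by
    intro y; simp only [vS, hw]; push_cast; ring_nf
  calc ∑ y : Fin l, ((r^2 * lapMat l x y : ℝ):ℂ) * vS l n y
      = (r:ℂ)^2 * ∑ y : Fin l, ((lapMat l x y : ℝ):ℂ) * w (y.1+1) := by
        rw [Finset.mul_sum]
        refine Finset.sum_congr rfl fun y _ => ?_
        rw [hv y]
        push_cast
        ring
    _ = (r:ℂ)^2 * (((2*Real.cos (π*(n:ℝ)/(l+1)) : ℝ):ℂ) * w (x.1+1)) := by rw [key, hident]
    _ = ((2*r^2*Real.cos (π*(n:ℝ)/(l+1)) : ℝ):ℂ) * vS l n x := by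
        rw [hv x]
        push_cast
        ring

lemma MG_one (l : ℕ) (hl : 1 ≤ l) (r : ℝ) (z : ℂ)
    (hz : ∀ n ∈ Icc 1 l, dS l r z n ≠ 0) :
    Mmat l r z * Gmat l r z = 1 := by
  have hNc : ((l:ℂ)+1) ≠ 0 := by
    have h1 : ((l:ℝ)+1) ≠ 0 := by positivity
    exact_mod_cast h1
  ext x y
  rw [Matrix.mul_apply]
  have hexp : ∀ t : Fin l, Mmat l r z x t * Gmat l r z t y
      = (∑ n ∈ Icc 1 l, (2/((l:ℂ)+1)) * (((r^2 * lapMat l x t : ℝ):ℂ) * vS l n t) * (vS l n y / dS l r z n))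
        - (if x = t then z * Gmat l r z t y else 0) := by
    intro t
    simp only [Mmat, Matrix.of_apply, sub_mul, Gmat]
    congr 1
    · simp only [Finset.mul_sum]
      refine Finset.sum_congr rfl fun n _ => ?_
      ring
    · by_cases h : x = t <;> simp [h]
  rw [Finset.sum_congr rfl (fun t _ => hexp t), Finset.sum_sub_distrib]
  rw [show ∑ t : Fin l, (if x = t then z * Gmat l r z t y else 0) = z * Gmat l r z x y from by
    rw [Finset.sum_ite_eq univ x (fun t => z * Gmat l r z t y)]; simp]
  rw [Finset.sum_comm]
  have hrow : ∀ n ∈ Icc 1 l,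
      ∑ t : Fin l, (2/((l:ℂ)+1)) * (((r^2 * lapMat l x t : ℝ):ℂ) * vS l n t) * (vS l n y / dS l r z n)
      = (2/((l:ℂ)+1)) * (((2*r^2*Real.cos (π*(n:ℝ)/(l+1)) : ℝ):ℂ) * vS l n x) * (vS l n y / dS l r z n) := by
    intro n _
    have e1 : ∀ t : Fin l, (2/((l:ℂ)+1)) * (((r^2 * lapMat l x t : ℝ):ℂ) * vS l n t) * (vS l n y / dS l r z n)
        = (((r^2 * lapMat l x t : ℝ):ℂ) * vS l n t) * ((2/((l:ℂ)+1)) * (vS l n y / dS l r z n)) := by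
      intro t; ring
    rw [Finset.sum_congr rfl (fun t _ => e1 t), ← Finset.sum_mul, eig_row l hl r n x]
    ring
  rw [Finset.sum_congr rfl hrow]
  have hzG : z * Gmat l r z x y = ∑ n ∈ Icc 1 l, z * ((2/((l:ℂ)+1)) * (vS l n x * vS l n y / dS l r z n)) := by
    simp only [Gmat, Matrix.of_apply, Finset.mul_sum]
  rw [hzG, ← Finset.sum_sub_distrib]
  have hcomb : ∀ n ∈ Icc 1 l,
      (2/((l:ℂ)+1)) * (((2*r^2*Real.cos (π*(n:ℝ)/(l+1)) : ℝ):ℂ) * vS l n x) * (vS l n y / dS l r z n)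
        - z * ((2/((l:ℂ)+1)) * (vS l n x * vS l n y / dS l r z n))
      = (2/((l:ℂ)+1)) * (vS l n x * vS l n y) := by
    intro n hn
    have hd := hz n hn
    have hds : ((2*r^2*Real.cos (π*(n:ℝ)/(l+1)) : ℝ):ℂ) = dS l r z n + z := by
      simp [dS]
    rw [hds]
    field_simp
    ring
  rw [Finset.sum_congr rfl hcomb, ← Finset.mul_sum]
  have horthC : ∑ n ∈ Icc 1 l, vS l n x * vS l n y
      = (((if x.1+1 = y.1+1 then ((l:ℝ)+1)/2 else 0 : ℝ)):ℂ) := by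
    rw [← sin_orth l (x.1+1) (y.1+1) (by simp [Finset.mem_Icc]) (by simp [Finset.mem_Icc])]
    push_cast
    refine Finset.sum_congr rfl fun n _ => ?_
    simp only [vS]
    push_cast
    ring
  rw [horthC, Matrix.one_apply]
  by_cases hxy : x = y
  · rw [if_pos hxy, if_pos (by rw [hxy])]
    push_cast
    field_simp
  · rw [if_neg hxy, if_neg (by intro h; exact hxy (Fin.ext (by omega)))]
    simp

lemma Gmat_symm (l : ℕ) (r : ℝ) (z : ℂ) : (Gmat l r z)ᵀ = Gmat l r z := by
  ext x y
  simp only [Matrix.transpose_apply, Gmat, Matrix.of_apply]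
  congr 1
  exact Finset.sum_congr rfl fun n _ => by ring

lemma Mmat_symm (l : ℕ) (r : ℝ) (z : ℂ) : (Mmat l r z)ᵀ = Mmat l r z := by
  ext x y
  simp only [Matrix.transpose_apply, Mmat, Matrix.of_apply, lapMat]
  have h1 : (if ((y:ℤ) = (x:ℤ)+1 ∨ (x:ℤ) = (y:ℤ)+1) then (1:ℝ) else 0)
      = (if ((x:ℤ) = (y:ℤ)+1 ∨ (y:ℤ) = (x:ℤ)+1) then (1:ℝ) else 0) := if_congr or_comm rfl rfl
  have h2 : (if y = x then (1:ℂ) else 0) = (if x = y then 1 else 0) := if_congr eq_comm rfl rfl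
  rw [h1, h2]

lemma GM_one (l : ℕ) (hl : 1 ≤ l) (r : ℝ) (z : ℂ)
    (hz : ∀ n ∈ Icc 1 l, dS l r z n ≠ 0) :
    Gmat l r z * Mmat l r z = 1 := by
  have h := congrArg Matrix.transpose (MG_one l hl r z hz)
  rwa [Matrix.transpose_mul, Gmat_symm, Mmat_symm, Matrix.transpose_one] at h

lemma sin_l_sq (l n : ℕ) (hl : 1 ≤ l) :
    Real.sin (π*(n:ℝ)*l/(l+1)) ^ 2 = Real.sin (π*(n:ℝ)/(l+1)) ^ 2 := by
  have hN : ((l:ℝ)+1) ≠ 0 := by positivity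
  have e : π*(n:ℝ)*l/((l:ℝ)+1) = n*π - π*(n:ℝ)/((l:ℝ)+1) := by field_simp; ring
  rw [e, Real.sin_sub, Real.sin_nat_mul_pi]
  have h1 := Real.sin_sq_add_cos_sq ((n:ℝ)*π)
  rw [Real.sin_nat_mul_pi] at h1
  nlinarith [h1]

noncomputable def Umat (l : ℕ) : Matrix (Fin l) (Fin 2) ℂ :=
  Matrix.of fun x j => if j = 0 then (if x.1 = 0 then 1 else 0) else (if x.1 = l-1 then 1 else 0)

noncomputable def Vmat (l : ℕ) (a b r : ℝ) : Matrix (Fin 2) (Fin l) ℂ :=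
  Matrix.of fun j y => if j = 0 then (if y.1 = 0 then ((a:ℂ)+(r:ℂ)) else 0)
    else (if y.1 = l-1 then ((b:ℂ)+(r:ℂ)) else 0)


/-- Eigenvalue equation for `D_r^{a,b}` in terms of the resolvent entries `G_{11}` and
`G_{1l}` of `r²Δ_l`. -/
theorem stmt_12 (l : ℕ) (hl : 2 ≤ l) (a b r : ℝ) (z : ℂ)
    (hz : ∀ n ∈ Finset.Icc 1 l, z ≠ ((2*r^2*Real.cos (π*n/(l+1)) : ℝ) : ℂ)) :
    let G11 : ℂ := (2/((l : ℂ)+1)) * ∑ n ∈ Finset.Icc 1 l,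
      ((Real.sin (π*n/(l+1))^2 : ℝ) : ℂ)
        / (((2*r^2*Real.cos (π*n/(l+1)) : ℝ) : ℂ) - z)
    let G1l : ℂ := (2/((l : ℂ)+1)) * ∑ n ∈ Finset.Icc 1 l,
      ((Real.sin (π*n/(l+1)) * Real.sin (π*n*l/(l+1)) : ℝ) : ℂ)
        / (((2*r^2*Real.cos (π*n/(l+1)) : ℝ) : ℂ) - z)
    (z ∈ spectrum ℂ ((Dmat l a b r).map Complex.ofReal) ↔
      1 + ((a : ℂ) + (b : ℂ) + 2*(r : ℂ)) * G11
        + ((a : ℂ) + (r : ℂ)) * ((b : ℂ) + (r : ℂ)) * (G11^2 - G1l^2) = 0) := by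
  intro G11 G1l
  have hl1 : 1 ≤ l := by omega
  have hNc : ((l:ℂ)+1) ≠ 0 := by
    have h1 : ((l:ℝ)+1) ≠ 0 := by positivity
    exact_mod_cast h1
  have hzd : ∀ n ∈ Icc 1 l, dS l r z n ≠ 0 := by
    intro n hn
    have := (hz n hn).symm
    simpa [dS, sub_ne_zero] using this
  have hMG := MG_one l hl1 r z hzd
  have hGM := GM_one l hl1 r z hzd
  set z0 : Fin l := ⟨0, by omega⟩ with hz0
  set zL : Fin l := ⟨l-1, by omega⟩ with hzL
  set D : Matrix (Fin l) (Fin l) ℂ := (Dmat l a b r).map Complex.ofReal with hD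
  -- decomposition
  have hDM : D - z • 1 = Mmat l r z + Umat l * Vmat l a b r := by
    ext x y
    simp only [hD, Matrix.sub_apply, Matrix.map_apply, Dmat, Mmat, Matrix.add_apply,
      Matrix.of_apply, Matrix.mul_apply, Fin.sum_univ_two, Umat, Vmat, Matrix.smul_apply,
      Matrix.one_apply, smul_eq_mul]
    norm_num
    push_cast [apply_ite Complex.ofReal]
    by_cases h1 : x.1 = 0 <;> by_cases h2 : y.1 = 0 <;> by_cases h3 : x.1 = l-1 <;>
      by_cases h4 : y.1 = l-1 <;>
      first
        | omega
        | (simp [h1, h2, h3, h4, show ¬((0:ℕ) = l-1) from by omega,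
            show ¬(l-1 = (0:ℕ)) from by omega]; try ring)
  -- G*U columns
  have hGU : ∀ t : Fin l, ∀ j : Fin 2, (Gmat l r z * Umat l) t j
      = if j = 0 then Gmat l r z t z0 else Gmat l r z t zL := by
    intro t j
    rw [Matrix.mul_apply]
    fin_cases j <;> simp only [Fin.mk_zero, Fin.mk_one]
    · simp only [Umat, Matrix.of_apply, eq_self_iff_true, if_true]
      have e : ∀ s : Fin l, Gmat l r z t s * (if s.1 = 0 then (1:ℂ) else 0)
          = if s = z0 then Gmat l r z t s else 0 := by
        intro s
        have : (s.1 = 0) ↔ (s = z0) := by rw [hz0, Fin.ext_iff]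
        rw [if_congr this rfl rfl]
        by_cases h : s = z0 <;> simp [h]
      rw [Finset.sum_congr rfl (fun s _ => e s), Finset.sum_ite_eq' univ z0]
      simp
    · have h10 : ((1:Fin 2) = 0) = False := by simp [Fin.ext_iff]
      simp only [Umat, Matrix.of_apply, h10, if_false]
      have e : ∀ s : Fin l, Gmat l r z t s * (if s.1 = l-1 then (1:ℂ) else 0)
          = if s = zL then Gmat l r z t s else 0 := by
        intro s
        have : (s.1 = l-1) ↔ (s = zL) := by rw [hzL, Fin.ext_iff]
        rw [if_congr this rfl rfl]
        by_cases h : s = zL <;> simp [h]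
      rw [Finset.sum_congr rfl (fun s _ => e s), Finset.sum_ite_eq' univ zL]
      simp
  -- V * (G*U) entries
  have hX : ∀ i j : Fin 2, (Vmat l a b r * (Gmat l r z * Umat l)) i j
      = (if i = 0 then ((a:ℂ)+(r:ℂ)) else ((b:ℂ)+(r:ℂ)))
        * Gmat l r z (if i = 0 then z0 else zL) (if j = 0 then z0 else zL) := by
    intro i j
    rw [Matrix.mul_apply]
    fin_cases i <;> simp only [Fin.mk_zero, Fin.mk_one]
    · simp only [Vmat, Matrix.of_apply, eq_self_iff_true, if_true]
      have e : ∀ t : Fin l, (if t.1 = 0 then ((a:ℂ)+(r:ℂ)) else 0) * (Gmat l r z * Umat l) t j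
          = if t = z0 then ((a:ℂ)+(r:ℂ)) * (Gmat l r z * Umat l) t j else 0 := by
        intro t
        have : (t.1 = 0) ↔ (t = z0) := by rw [hz0, Fin.ext_iff]
        rw [if_congr this rfl rfl]
        by_cases h : t = z0 <;> simp [h]
      rw [Finset.sum_congr rfl (fun t _ => e t), Finset.sum_ite_eq' univ z0]
      rw [hGU z0 j]
      by_cases hj : j = 0 <;> simp [hj]
    · have h10 : ((1:Fin 2) = 0) = False := by simp [Fin.ext_iff]
      simp only [Vmat, Matrix.of_apply, h10, if_false]
      have e : ∀ t : Fin l, (if t.1 = l-1 then ((b:ℂ)+(r:ℂ)) else 0) * (Gmat l r z * Umat l) t j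
          = if t = zL then ((b:ℂ)+(r:ℂ)) * (Gmat l r z * Umat l) t j else 0 := by
        intro t
        have : (t.1 = l-1) ↔ (t = zL) := by rw [hzL, Fin.ext_iff]
        rw [if_congr this rfl rfl]
        by_cases h : t = zL <;> simp [h]
      rw [Finset.sum_congr rfl (fun t _ => e t), Finset.sum_ite_eq' univ zL]
      rw [hGU zL j]
      by_cases hj : j = 0 <;> simp [hj]
  -- Gmat entry identifications
  have hG00 : Gmat l r z z0 z0 = G11 := by
    show _ = (2/((l : ℂ)+1)) * ∑ n ∈ Finset.Icc 1 l,
      ((Real.sin (π*n/(l+1))^2 : ℝ) : ℂ) / (((2*r^2*Real.cos (π*n/(l+1)) : ℝ) : ℂ) - z)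
    simp only [Gmat, Matrix.of_apply]
    congr 1
    refine Finset.sum_congr rfl fun n _ => ?_
    simp only [vS, dS, hz0]
    norm_num [pow_two]
  have hv0 : ∀ n : ℕ, vS l n z0 = ((Real.sin (π*n/(l+1)) : ℝ):ℂ) := by
    intro n
    simp only [vS, hz0]
    norm_num
  have hvL : ∀ n : ℕ, vS l n zL = ((Real.sin (π*n*l/(l+1)) : ℝ):ℂ) := by
    intro n
    simp only [vS, hzL]
    have e : ((l-1 : ℕ):ℝ) + 1 = (l:ℝ) := by
      push_cast [Nat.cast_sub hl1]
      ring
    norm_num [e]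
  have hGL0 : Gmat l r z zL z0 = G1l := by
    show _ = (2/((l : ℂ)+1)) * ∑ n ∈ Finset.Icc 1 l,
      ((Real.sin (π*n/(l+1)) * Real.sin (π*n*l/(l+1)) : ℝ) : ℂ)
        / (((2*r^2*Real.cos (π*n/(l+1)) : ℝ) : ℂ) - z)
    simp only [Gmat, Matrix.of_apply]
    congr 1
    refine Finset.sum_congr rfl fun n _ => ?_
    rw [hv0 n, hvL n]
    simp only [dS]
    push_cast
    ring
  have hG0L : Gmat l r z z0 zL = G1l := by
    show _ = (2/((l : ℂ)+1)) * ∑ n ∈ Finset.Icc 1 l,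
      ((Real.sin (π*n/(l+1)) * Real.sin (π*n*l/(l+1)) : ℝ) : ℂ)
        / (((2*r^2*Real.cos (π*n/(l+1)) : ℝ) : ℂ) - z)
    simp only [Gmat, Matrix.of_apply]
    congr 1
    refine Finset.sum_congr rfl fun n _ => ?_
    rw [hv0 n, hvL n]
    simp only [dS]
    push_cast
    ring
  have hGLL : Gmat l r z zL zL = G11 := by
    show _ = (2/((l : ℂ)+1)) * ∑ n ∈ Finset.Icc 1 l,
      ((Real.sin (π*n/(l+1))^2 : ℝ) : ℂ) / (((2*r^2*Real.cos (π*n/(l+1)) : ℝ) : ℂ) - z)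
    simp only [Gmat, Matrix.of_apply]
    congr 1
    refine Finset.sum_congr rfl fun n _ => ?_
    rw [hvL n]
    simp only [dS]
    rw [show ((Real.sin (π*n*l/(l+1)) : ℝ):ℂ) * ((Real.sin (π*n*l/(l+1)) : ℝ):ℂ)
        = ((Real.sin (π*(n:ℝ)*l/(l+1))^2 : ℝ):ℂ) from by push_cast; ring,
      sin_l_sq l n hl1]
  -- factorization and determinant
  have hfact : D - z • 1 = Mmat l r z * (1 + Gmat l r z * (Umat l * Vmat l a b r)) := by
    rw [Matrix.mul_add, Matrix.mul_one, ← Matrix.mul_assoc, hMG, Matrix.one_mul, hDM]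
  have hdetD : (D - z • 1).det
      = (Mmat l r z).det * (1 + Vmat l a b r * (Gmat l r z * Umat l)).det := by
    rw [hfact, Matrix.det_mul]
    congr 1
    rw [← Matrix.mul_assoc, Matrix.det_one_add_mul_comm]
  have hMdet : (Mmat l r z).det ≠ 0 := by
    intro h
    have h2 := congrArg Matrix.det hMG
    rw [Matrix.det_mul, h, zero_mul, Matrix.det_one] at h2
    exact zero_ne_one h2
  have hdet2 : (1 + Vmat l a b r * (Gmat l r z * Umat l)).det
      = 1 + ((a : ℂ) + (b : ℂ) + 2*(r : ℂ)) * G11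
        + ((a : ℂ) + (r : ℂ)) * ((b : ℂ) + (r : ℂ)) * (G11^2 - G1l^2) := by
    rw [Matrix.det_fin_two]
    simp only [Matrix.add_apply, Matrix.one_apply]
    rw [hX 0 0, hX 0 1, hX 1 0, hX 1 1]
    norm_num [hG00, hG0L, hGL0, hGLL]
    ring
  -- spectrum characterization
  have hspec : z ∈ spectrum ℂ D ↔ (D - z • 1).det = 0 := by
    rw [spectrum.mem_iff]
    have e : algebraMap ℂ (Matrix (Fin l) (Fin l) ℂ) z - D = -(D - z • 1) := by
      rw [Algebra.algebraMap_eq_smul_one, neg_sub]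
    rw [e, IsUnit.neg_iff, Matrix.isUnit_iff_isUnit_det, isUnit_iff_ne_zero, not_ne_iff]
  rw [hspec, hdetD, mul_eq_zero, or_iff_right hMdet, hdet2]
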